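/- For every finite set Q, the map safra2slice sends every ranked Safra tree over Q to a ranked slice over Q, the map slice2safra sends every ranked slice over Q with at least one set to a ranked Safra tree over Q, and these two maps are mutually inverse; hence they constitute a bijection between the set of ranked Safra trees over Q and the set of ranked slices over Q with at least one set. -/

import Mathlib

universe u

/-- A finite ordered rooted tree, each node carrying a label (a subset of `Q`) and a
rank (a natural number); the children lists give the sibling order. -/
inductive OTree (Q : Type u) : Type u where
  | node : Set Q → ℕ → List (OTree Q) → OTree Q

namespace OTree

variable {Q : Type u}

/-- Label of the root node. -/
def rootLabel : OTree Q → Set Q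
  | node S _ _ => S

/-- Rank of the root node. -/
def rootRank : OTree Q → ℕ
  | node _ r _ => r

mutual
  /-- Depth-first post-order listing of the (label, rank) pairs of all nodes. -/
  def postorder : OTree Q → List (Set Q × ℕ)
    | .node S r cs => postorderL cs ++ [(S, r)]
  def postorderL : List (OTree Q) → List (Set Q × ℕ)
    | [] => []
    | t :: ts => postorder t ++ postorderL ts
end

/-- The labels of all nodes, in post-order. -/
def labels (t : OTree Q) : List (Set Q) := (postorder t).map Prod.fst

/-- The ranks of all nodes, in post-order. -/
def ranks (t : OTree Q) : List ℕ := (postorder t).map Prod.snd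

/-- Number of nodes. -/
def size (t : OTree Q) : ℕ := (postorder t).length

mutual
  /-- Each parent has a smaller rank than each of its children, and the ranks of the
  children of any node strictly increase from left to right. -/
  def RanksOK : OTree Q → Prop
    | .node _ r cs =>
        (cs.map rootRank).Pairwise (· < ·) ∧ (∀ c ∈ cs, r < rootRank c) ∧ RanksOKL cs
  def RanksOKL : List (OTree Q) → Prop
    | [] => True
    | t :: ts => RanksOK t ∧ RanksOKL ts
end

/-- A valid ranked Safra tree: nonempty pairwise disjoint labels, the ranks form a
bijection onto `{1,…,n}`, a parent's rank is smaller than its children's ranks and the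
sibling order agrees with the rank order. -/
def IsRankedSafraTree (t : OTree Q) : Prop :=
  (∀ S ∈ labels t, S.Nonempty) ∧ (labels t).Pairwise Disjoint ∧
  (ranks t).Perm (List.range' 1 (size t)) ∧ RanksOK t

end OTree

/-- A ranked slice over `Q`, in list form: a tuple of pairwise disjoint nonempty
subsets of `Q` together with the list of its ranks, which is a permutation of
`[1,…,n]` whose last entry is `1`. -/
def IsRankedSliceL {Q : Type u} (p : List (Set Q) × List ℕ) : Prop :=
  (∀ T ∈ p.1, T.Nonempty) ∧ p.1.Pairwise Disjoint ∧
  p.2.Perm (List.range' 1 p.1.length) ∧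
  (1 ≤ p.1.length → p.2.getLast? = some 1)

namespace OTree

variable {Q : Type u}

/-- `safra2slice`: list the labels and ranks of the tree in depth-first post-order. -/
def safra2slice (t : OTree Q) : List (Set Q) × List ℕ := (labels t, ranks t)

/-- One step of the stack-based construction of the rank tree of a ranked slice:
all trees on the stack whose root rank exceeds `r` become (in reverse popping order)
the children of a new node labelled `S` with rank `r`. -/
def push (acc : List (OTree Q)) (S : Set Q) (r : ℕ) : List (OTree Q) :=
  OTree.node S r ((acc.takeWhile (fun t => decide (r < rootRank t))).reverse) ::
    acc.dropWhile (fun t => decide (r < rootRank t))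

/-- The stack obtained by processing a list of (label, rank) pairs left to right. -/
def buildStack (l : List (Set Q × ℕ)) : List (OTree Q) :=
  l.foldl (fun acc p => push acc p.1 p.2) []

/-- `slice2safra`: the rank tree of a ranked slice (the parent of an index is the
closest index to the right with smaller rank; siblings are ordered by index), with
node `i` labelled by the `i`-th set and ranked by the `i`-th rank. -/
def slice2safra (p : List (Set Q) × List ℕ) : OTree Q :=
  (buildStack (p.1.zip p.2)).headD (OTree.node ∅ 1 [])

end OTree

namespace OTree
variable {Q : Type u}

theorem ranksOKL_iff (cs : List (OTree Q)) : RanksOKL cs ↔ ∀ c ∈ cs, RanksOK c := by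
  induction cs with
  | nil => simp [RanksOKL]
  | cons t ts ih => simp [RanksOKL, ih]

theorem postorderL_append (l₁ l₂ : List (OTree Q)) :
    postorderL (l₁ ++ l₂) = postorderL l₁ ++ postorderL l₂ := by
  induction l₁ with
  | nil => simp [postorderL]
  | cons t ts ih => simp [postorderL, ih]

theorem root_mem_postorder (t : OTree Q) : (rootLabel t, rootRank t) ∈ postorder t := by
  cases t with
  | node S r cs => simp [postorder, rootLabel, rootRank]

theorem mem_postorderL {p : Set Q × ℕ} {cs : List (OTree Q)} :
    p ∈ postorderL cs ↔ ∃ c ∈ cs, p ∈ postorder c := by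
  induction cs with
  | nil => simp [postorderL]
  | cons t ts ih => simp [postorderL, ih]

theorem postorder_ne_nil (t : OTree Q) : postorder t ≠ [] := by
  cases t with
  | node S r cs => simp [postorder]

theorem rootRank_le : ∀ (t : OTree Q), RanksOK t → ∀ p ∈ postorder t, rootRank t ≤ p.2
  | .node S r cs, h => by
    rw [RanksOK] at h
    intro p hp
    rw [postorder, List.mem_append] at hp
    rcases hp with hp | hp
    · rcases mem_postorderL.1 hp with ⟨c, hc, hpc⟩
      have h1 := rootRank_le c ((ranksOKL_iff cs).1 h.2.2 c hc) p hpc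
      have h2 := h.2.1 c hc
      simp only [rootRank]
      omega
    · simp only [List.mem_singleton] at hp
      subst hp
      simp [rootRank]
termination_by t => sizeOf t
decreasing_by
  have := List.sizeOf_lt_of_mem hc
  simp_wf
  omega

theorem takeWhile_dropWhile_append {α : Type*} (p : α → Bool) {l₁ l₂ : List α}
    (h₁ : ∀ x ∈ l₁, p x = true) (h₂ : ∀ x ∈ l₂, p x = false) :
    (l₁ ++ l₂).takeWhile p = l₁ ∧ (l₁ ++ l₂).dropWhile p = l₂ := by
  induction l₁ with
  | nil =>
    cases l₂ with
    | nil => simp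
    | cons a as =>
      simp only [List.nil_append]
      rw [List.takeWhile_cons, List.dropWhile_cons, h₂ a (by simp)]
      simp
  | cons a as ih =>
    have ha : p a = true := h₁ a (by simp)
    simp only [List.cons_append]
    rw [List.takeWhile_cons, List.dropWhile_cons, ha]
    have := ih (fun x hx => h₁ x (by simp [hx]))
    simp [this.1, this.2]

mutual
theorem roundtrip : ∀ (t : OTree Q) (acc : List (OTree Q)), RanksOK t →
    (∀ s ∈ acc, rootRank s < rootRank t) →
    (postorder t).foldl (fun a p => push a p.1 p.2) acc = t :: acc
  | .node S r cs, acc, h, hacc => by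
    rw [RanksOK] at h
    replace hacc : ∀ s ∈ acc, rootRank s < r := hacc
    rw [postorder, List.foldl_append]
    rw [roundtripL cs acc h.2.2 h.1
      (fun s hs c hc => lt_trans (hacc s hs) (h.2.1 c hc))]
    simp only [List.foldl_cons, List.foldl_nil]
    rw [push]
    have hkey := takeWhile_dropWhile_append (fun t => decide (r < rootRank t))
      (l₁ := cs.reverse) (l₂ := acc)
      (fun x hx => by simp [h.2.1 x (List.mem_reverse.1 hx)])
      (fun x hx => by simp [Nat.not_lt.2 (le_of_lt (hacc x hx))])
    rw [hkey.1, hkey.2, List.reverse_reverse]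
theorem roundtripL : ∀ (cs : List (OTree Q)) (acc : List (OTree Q)), RanksOKL cs →
    ((cs.map rootRank).Pairwise (· < ·)) →
    (∀ s ∈ acc, ∀ c ∈ cs, rootRank s < rootRank c) →
    (postorderL cs).foldl (fun a p => push a p.1 p.2) acc = cs.reverse ++ acc
  | [], acc, _, _, _ => by simp [postorderL]
  | t :: ts, acc, h, hp, hacc => by
    rw [RanksOKL] at h
    rw [List.map_cons, List.pairwise_cons] at hp
    rw [postorderL, List.foldl_append]
    rw [roundtrip t acc h.1 (fun s hs => hacc s hs t (by simp))]
    rw [roundtripL ts (t :: acc) h.2 hp.2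
      (by
        intro s hs c hc
        rcases List.mem_cons.1 hs with rfl | hs
        · exact hp.1 (rootRank c) (List.mem_map_of_mem (f := rootRank) hc)
        · exact hacc s hs c (List.mem_cons_of_mem t hc))]
    simp

end

theorem head_dropWhile_false {α : Type*} (p : α → Bool) :
    ∀ (l : List α) (x : α) (xs : List α), l.dropWhile p = x :: xs → p x = false := by
  intro l
  induction l with
  | nil => intro x xs h; simp at h
  | cons a as ih =>
    intro x xs h
    rw [List.dropWhile_cons] at h
    by_cases hpa : p a = true
    · rw [hpa] at h
      simp only [if_true] at h
      exact ih x xs h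
    · have hpaf : p a = false := eq_false_of_ne_true hpa
      rw [hpaf] at h
      simp only [Bool.false_eq_true, if_false] at h
      injection h with h1 _
      rw [← h1]
      exact hpaf

theorem buildStack_invariant : ∀ (l : List (Set Q × ℕ)) (acc : List (OTree Q)),
    (∀ t ∈ acc, RanksOK t) →
    ((acc.map rootRank).Pairwise (· > ·)) →
    (∀ t ∈ acc, ∀ p ∈ postorder t, p.2 ∉ l.map Prod.snd) →
    ((l.map Prod.snd).Nodup) →
    (∀ t ∈ l.foldl (fun a p => push a p.1 p.2) acc, RanksOK t) ∧
    (((l.foldl (fun a p => push a p.1 p.2) acc).map rootRank).Pairwise (· > ·)) ∧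
    postorderL (l.foldl (fun a p => push a p.1 p.2) acc).reverse
      = postorderL acc.reverse ++ l := by
  intro l
  induction l with
  | nil => intro acc h1 h2 h3 h4; exact ⟨h1, h2, by simp⟩
  | cons q l ih =>
    intro acc h1 h2 h3 h4
    obtain ⟨S, r⟩ := q
    set tk := acc.takeWhile (fun t => decide (r < rootRank t)) with htk
    set dp := acc.dropWhile (fun t => decide (r < rootRank t)) with hdp
    have hsplit : tk ++ dp = acc := List.takeWhile_append_dropWhile
    have htk_lt : ∀ t ∈ tk, r < rootRank t := fun t ht => by
      simpa using List.mem_takeWhile_imp ht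
    have hdp_sub : ∀ t ∈ dp, t ∈ acc := fun t ht => hsplit ▸ List.mem_append_right _ ht
    have htk_sub : ∀ t ∈ tk, t ∈ acc := fun t ht => hsplit ▸ List.mem_append_left _ ht
    have h2' : ((tk ++ dp).map rootRank).Pairwise (· > ·) := by rw [hsplit]; exact h2
    rw [List.map_append, List.pairwise_append] at h2'
    -- node ranks of acc members avoid r and l's ranks
    have havoid : ∀ t ∈ acc, ∀ p ∈ postorder t, p.2 ≠ r ∧ p.2 ∉ l.map Prod.snd := by
      intro t ht p hp
      have := h3 t ht p hp
      simp only [List.map_cons, List.mem_cons, not_or] at this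
      exact this
    -- every element of dp has root rank < r
    have hdp_lt : ∀ t ∈ dp, rootRank t < r := by
      intro t ht
      cases hd : dp with
      | nil => rw [hd] at ht; simp at ht
      | cons d ds =>
        have hdhead : rootRank d < r := by
          have hfalse := head_dropWhile_false _ acc d ds (by rw [← hdp, hd])
          simp only [decide_eq_false_iff_not, Nat.not_lt] at hfalse
          have hne : rootRank d ≠ r :=
            (havoid d (hdp_sub d (by rw [hd]; simp)) _ (root_mem_postorder d)).1
          omega
        rw [hd] at ht
        rcases List.mem_cons.1 ht with rfl | ht
        · exact hdhead
        · have hpw := h2'.2.1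
          rw [hd, List.map_cons, List.pairwise_cons] at hpw
          have := hpw.1 (rootRank t) (List.mem_map_of_mem (f := rootRank) ht)
          omega
    -- the new node is a valid tree
    have hnew : RanksOK (OTree.node S r tk.reverse) := by
      rw [RanksOK]
      refine ⟨?_, ?_, ?_⟩
      · rw [List.map_reverse, List.pairwise_reverse]
        exact h2'.1
      · intro c hc; exact htk_lt c (List.mem_reverse.1 hc)
      · exact (ranksOKL_iff _).2 (fun c hc => h1 c (htk_sub c (List.mem_reverse.1 hc)))
    have hstep : (List.foldl (fun a p => push a p.1 p.2) acc ((S, r) :: l))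
        = List.foldl (fun a p => push a p.1 p.2) (OTree.node S r tk.reverse :: dp) l := by
      rw [List.foldl_cons]; rfl
    have hponew : postorder (OTree.node S r tk.reverse) = postorderL tk.reverse ++ [(S, r)] := by
      rw [postorder]
    have hporev : postorderL (OTree.node S r tk.reverse :: dp).reverse
        = postorderL acc.reverse ++ [(S, r)] := by
      rw [List.reverse_cons, postorderL_append, ← hsplit, List.reverse_append,
        postorderL_append]
      simp [postorderL, hponew, List.append_assoc]
    have key := ih (OTree.node S r tk.reverse :: dp)
      (by
        intro t ht
        rcases List.mem_cons.1 ht with rfl | ht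
        · exact hnew
        · exact h1 t (hdp_sub t ht))
      (by
        rw [List.map_cons, List.pairwise_cons]
        constructor
        · intro a ha
          rcases List.mem_map.1 ha with ⟨t, ht, rfl⟩
          exact hdp_lt t ht
        · exact h2'.2.1)
      (by
        intro t ht p hp
        rcases List.mem_cons.1 ht with rfl | ht
        · rw [hponew, List.mem_append] at hp
          rcases hp with hp | hp
          · rcases mem_postorderL.1 hp with ⟨c, hc, hpc⟩
            exact (havoid c (htk_sub c (List.mem_reverse.1 hc)) p hpc).2
          · simp only [List.mem_singleton] at hp
            subst hp
            rw [List.map_cons, List.nodup_cons] at h4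
            exact h4.1
        · exact (havoid t (hdp_sub t ht) p hp).2)
      (by rw [List.map_cons, List.nodup_cons] at h4; exact h4.2)
    rw [hstep]
    refine ⟨key.1, key.2.1, ?_⟩
    rw [key.2.2, hporev]
    simp

theorem ranks_getLast (t : OTree Q) : (ranks t).getLast? = some (rootRank t) := by
  cases t with
  | node S r cs =>
    rw [ranks, postorder, List.map_append]
    simp [rootRank, List.getLast?_concat]

theorem size_pos (t : OTree Q) : 1 ≤ size t := by
  rw [size]
  exact List.length_pos_iff.2 (postorder_ne_nil t)

theorem rootRank_eq_one (t : OTree Q) (h : IsRankedSafraTree t) : rootRank t = 1 := by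
  obtain ⟨-, -, hperm, hok⟩ := h
  have h1 : (1 : ℕ) ∈ List.range' 1 (size t) := by
    rw [List.mem_range'_1]
    have := size_pos t
    omega
  have h1' : (1 : ℕ) ∈ ranks t := hperm.mem_iff.2 h1
  obtain ⟨p, hp, hp2⟩ := List.mem_map.1 h1'
  have hle : rootRank t ≤ 1 := hp2 ▸ rootRank_le t hok p hp
  have hmem : rootRank t ∈ ranks t :=
    List.mem_map_of_mem (f := Prod.snd) (root_mem_postorder t)
  have := (List.mem_range'_1).1 (hperm.mem_iff.1 hmem)
  omega

end OTree



open OTree in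
/-- `safra2slice` maps ranked Safra trees over `Q` to nonempty ranked
slices over `Q`, `slice2safra` maps nonempty ranked slices over `Q` to ranked Safra
trees over `Q`, and the two maps are mutually inverse; hence they form a bijection
between ranked Safra trees over `Q` and ranked slices over `Q` with at least one set. -/
theorem safra2slice_slice2safra_bijection (Q : Type u) :
    (∀ t : OTree Q, IsRankedSafraTree t →
      IsRankedSliceL (safra2slice t) ∧ (safra2slice t).1 ≠ [] ∧
        slice2safra (safra2slice t) = t) ∧
    (∀ p : List (Set Q) × List ℕ, IsRankedSliceL p → p.1 ≠ [] →
      IsRankedSafraTree (slice2safra p) ∧ safra2slice (slice2safra p) = p) := by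
  constructor
  · intro t ht
    obtain ⟨hne, hdisj, hperm, hok⟩ := ht
    have hroot1 : rootRank t = 1 := rootRank_eq_one t ⟨hne, hdisj, hperm, hok⟩
    refine ⟨⟨hne, hdisj, ?_, ?_⟩, ?_, ?_⟩
    · simpa [safra2slice, labels, size] using hperm
    · intro _
      rw [safra2slice]
      simp only
      rw [ranks_getLast, hroot1]
    · simp only [safra2slice, ne_eq, labels]
      simp [postorder_ne_nil t]
    · have hzip : (labels t).zip (ranks t) = postorder t := by
        rw [labels, ranks, List.zip_map']
        simp
      rw [safra2slice, slice2safra]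
      simp only
      rw [hzip, buildStack, roundtrip t [] hok (by simp)]
      rfl
  · rintro ⟨Ss, rs⟩ ⟨hne1, hdisj, hperm, hlast⟩ hne
    simp only at hne1 hdisj hperm hlast hne ⊢
    have hn : 1 ≤ Ss.length := List.length_pos_iff.2 hne
    have hlen : rs.length = Ss.length := by rw [hperm.length_eq, List.length_range']
    obtain ⟨rs', hrs⟩ := List.getLast?_eq_some_iff.1 (hlast hn)
    set Sl := Ss.getLast hne with hSl
    have hSs : Ss = Ss.dropLast ++ [Sl] := (List.dropLast_append_getLast hne).symm
    set Ss' := Ss.dropLast with hSs'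
    have hlen' : Ss'.length = rs'.length := by
      have h1 : Ss.length = Ss'.length + 1 := by rw [hSs]; simp
      have h2 : rs.length = rs'.length + 1 := by rw [hrs]; simp
      omega
    have hzip : Ss.zip rs = Ss'.zip rs' ++ [(Sl, 1)] := by
      conv_lhs => rw [hSs, hrs]
      rw [List.zip_append hlen']
      rfl
    have hsnd : (Ss'.zip rs').map Prod.snd = rs' :=
      List.map_snd_zip (le_of_eq hlen'.symm)
    have hnodup : rs.Nodup := hperm.nodup_iff.2 List.nodup_range'
    have hnodup' : rs'.Nodup ∧ (1 : ℕ) ∉ rs' := by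
      rw [hrs] at hnodup
      rw [List.nodup_append] at hnodup
      exact ⟨hnodup.1, fun hc => hnodup.2.2 1 hc 1 (by simp) rfl⟩
    obtain ⟨k1, k2, k3⟩ := buildStack_invariant (Ss'.zip rs') []
      (by simp) (by simp) (by simp) (by rw [hsnd]; exact hnodup'.1)
    set res := (Ss'.zip rs').foldl (fun a p => push a p.1 p.2) [] with hres
    rw [List.reverse_nil] at k3
    simp only [postorderL, List.nil_append] at k3
    have hroots : ∀ u ∈ res, 1 < rootRank u := by
      intro u hu
      have hmem : (rootLabel u, rootRank u) ∈ postorderL res.reverse :=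
        mem_postorderL.2 ⟨u, List.mem_reverse.2 hu, root_mem_postorder u⟩
      rw [k3] at hmem
      have h1 : rootRank u ∈ rs' := by
        rw [← hsnd]
        exact List.mem_map_of_mem (f := Prod.snd) hmem
      have h2 : rootRank u ∈ rs := by rw [hrs]; exact List.mem_append_left _ h1
      have h3 := (List.mem_range'_1).1 (hperm.mem_iff.1 h2)
      have h4 : rootRank u ≠ 1 := fun hc => hnodup'.2 (hc ▸ h1)
      omega
    have hbuild : buildStack (Ss.zip rs) = [OTree.node Sl 1 res.reverse] := by
      rw [buildStack, hzip, List.foldl_append, ← hres]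
      simp only [List.foldl_cons, List.foldl_nil]
      rw [push]
      rw [List.takeWhile_eq_self_iff.2 (fun x hx => by simp [hroots x hx]),
        List.dropWhile_eq_nil_iff.2 (fun x hx => by simp [hroots x hx])]
    set t := OTree.node Sl 1 res.reverse with htdef
    have hslice : slice2safra (Ss, rs) = t := by
      rw [slice2safra]
      simp only
      rw [hbuild]
      rfl
    have hpo : postorder t = Ss.zip rs := by
      rw [htdef, postorder, k3, hzip]
    have hlabels : labels t = Ss := by
      rw [labels, hpo]
      exact List.map_fst_zip (le_of_eq hlen.symm)
    have hranks : ranks t = rs := by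
      rw [ranks, hpo]
      exact List.map_snd_zip (le_of_eq hlen)
    have hsize : size t = Ss.length := by
      rw [size, hpo, List.length_zip, hlen]
      simp
    rw [hslice]
    refine ⟨⟨by rw [hlabels]; exact hne1, by rw [hlabels]; exact hdisj,
      by rw [hranks, hsize]; exact hperm, ?_⟩, ?_⟩
    · rw [htdef, RanksOK]
      refine ⟨?_, ?_, ?_⟩
      · rw [List.map_reverse, List.pairwise_reverse]
        exact k2
      · intro c hc
        exact hroots c (List.mem_reverse.1 hc)
      · exact (ranksOKL_iff _).2 (fun c hc => k1 c (List.mem_reverse.1 hc))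
    · rw [safra2slice, hlabels, hranks]
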